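/- Let 0 < q < 1 and define the Jackson integral J[f](x) = (1−q) \sum_{n≥0} f(q^n x) q^n x (assuming absolute convergence). Then for functions f, g: J[f]·J[g] + (1−q)·J[M_{id}[f·g]] = J[J[f]·g + f·J[g]], where M_{id}[h](x) = x·h(x). -/

import Mathlib

/-- The Jackson integral `J[f](x) = (1−q) ∑_{n≥0} f(qⁿx) qⁿ x`. -/
noncomputable def jackson (q : ℝ) (f : ℝ → ℝ) (x : ℝ) : ℝ :=
  (1 - q) * ∑' n : ℕ, f (q ^ n * x) * (q ^ n * x)

/-- The Rota–Baxter-type relation for the Jackson integral: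
`J[f]·J[g] + (1−q)·J[M_id[f·g]] = J[J[f]·g + f·J[g]]`. -/
theorem jackson_rota_baxter (q : ℝ) (hq0 : 0 < q) (hq1 : q < 1) (f g : ℝ → ℝ)
    (hf : ∀ x : ℝ, Summable fun n : ℕ => f (q ^ n * x) * (q ^ n * x))
    (hg : ∀ x : ℝ, Summable fun n : ℕ => g (q ^ n * x) * (q ^ n * x))
    (hfg : ∀ x : ℝ, Summable fun p : ℕ × ℕ =>
      (f (q ^ p.1 * x) * (q ^ p.1 * x)) * (g (q ^ p.2 * x) * (q ^ p.2 * x))) :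
    ∀ x : ℝ, jackson q f x * jackson q g x
        + (1 - q) * jackson q (fun y => y * (f y * g y)) x =
      jackson q (fun y => jackson q f y * g y + f y * jackson q g y) x := by
  intro x
  set a : ℕ → ℝ := fun n => f (q ^ n * x) * (q ^ n * x) with ha_def
  set b : ℕ → ℝ := fun n => g (q ^ n * x) * (q ^ n * x) with hb_def
  have ha : Summable a := hf x
  have hb : Summable b := hg x
  set u : ℕ × ℕ → ℝ := fun p => a p.1 * b p.2 with hu_def
  have hu : Summable u := hfg x
  -- injections
  have he1 : Function.Injective (fun p : ℕ × ℕ => (p.2 + p.1, p.1)) := by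
    intro p p' h
    simp only [Prod.mk.injEq] at h
    obtain ⟨h1, h2⟩ := h
    have : p.2 = p'.2 := by omega
    exact Prod.ext h2 this
  have he2 : Function.Injective (fun p : ℕ × ℕ => (p.1, p.2 + p.1)) := by
    intro p p' h
    simp only [Prod.mk.injEq] at h
    obtain ⟨h1, h2⟩ := h
    have : p.2 = p'.2 := by omega
    exact Prod.ext h1 this
  have hd : Function.Injective (fun n : ℕ => ((n, n) : ℕ × ℕ)) := by
    intro n n' h; simpa using (Prod.mk.injEq _ _ _ _ ▸ h).1
  have hr1 : Set.range (fun p : ℕ × ℕ => (p.2 + p.1, p.1)) = {p : ℕ × ℕ | p.2 ≤ p.1} := by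
    ext p
    constructor
    · rintro ⟨⟨n, m⟩, rfl⟩; simp
    · intro hp
      refine ⟨(p.2, p.1 - p.2), ?_⟩
      simp only [Set.mem_setOf_eq] at hp
      rw [Prod.ext_iff]
      constructor <;> simp <;> omega
  have hr2 : Set.range (fun p : ℕ × ℕ => (p.1, p.2 + p.1)) = {p : ℕ × ℕ | p.1 ≤ p.2} := by
    ext p
    constructor
    · rintro ⟨⟨n, m⟩, rfl⟩; simp
    · intro hp
      refine ⟨(p.1, p.2 - p.1), ?_⟩
      simp only [Set.mem_setOf_eq] at hp
      rw [Prod.ext_iff]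
      constructor <;> simp <;> omega
  have hrd : Set.range (fun n : ℕ => ((n, n) : ℕ × ℕ)) = {p : ℕ × ℕ | p.1 = p.2} := by
    ext p
    constructor
    · rintro ⟨n, rfl⟩; simp
    · intro hp
      refine ⟨p.1, ?_⟩
      simp only [Set.mem_setOf_eq] at hp
      rw [Prod.ext_iff]
      constructor <;> simp <;> omega
  set S := ∑' p : ℕ × ℕ, u p with hS_def
  set D := ∑' n : ℕ, a n * b n with hD_def
  -- key combinatorial identity
  have hA : (∑' p : ℕ × ℕ, u (p.2 + p.1, p.1)) = ∑' p : {p : ℕ × ℕ | p.2 ≤ p.1}, u p := by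
    rw [← tsum_range u he1, hr1]
  have hB : (∑' p : ℕ × ℕ, u (p.1, p.2 + p.1)) = ∑' p : {p : ℕ × ℕ | p.1 ≤ p.2}, u p := by
    rw [← tsum_range u he2, hr2]
  have hDd : D = ∑' p : {p : ℕ × ℕ | p.1 = p.2}, u p := by
    have h0 : D = ∑' n : ℕ, u (n, n) := rfl
    rw [h0, ← tsum_range u hd, hrd]
  have hsplit : {p : ℕ × ℕ | p.1 ≤ p.2} = {p : ℕ × ℕ | p.2 ≤ p.1}ᶜ ∪ {p : ℕ × ℕ | p.1 = p.2} := by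
    ext p; simp [Set.mem_union]; omega
  have hdisj : Disjoint ({p : ℕ × ℕ | p.2 ≤ p.1}ᶜ) {p : ℕ × ℕ | p.1 = p.2} := by
    rw [Set.disjoint_left]
    intro p hp hp'
    simp at hp hp'
    omega
  have hB' : (∑' p : {p : ℕ × ℕ | p.1 ≤ p.2}, u p)
      = (∑' p : ({p : ℕ × ℕ | p.2 ≤ p.1}ᶜ : Set (ℕ × ℕ)), u p)
        + ∑' p : {p : ℕ × ℕ | p.1 = p.2}, u p := by
    rw [hsplit]
    exact Summable.tsum_union_disjoint hdisj (hu.subtype _) (hu.subtype _)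
  have hcompl : (∑' p : {p : ℕ × ℕ | p.2 ≤ p.1}, u p)
      + (∑' p : ({p : ℕ × ℕ | p.2 ≤ p.1}ᶜ : Set (ℕ × ℕ)), u p) = S :=
    Summable.tsum_add_tsum_compl (hu.subtype _) (hu.subtype _)
  have hkey : (∑' p : ℕ × ℕ, u (p.2 + p.1, p.1)) + (∑' p : ℕ × ℕ, u (p.1, p.2 + p.1))
      = S + D := by
    rw [hA, hB, hB', hDd, ← hcompl]; ring
  -- summability of the shifted families
  have hsum1 : Summable fun p : ℕ × ℕ => u (p.2 + p.1, p.1) := hu.comp_injective he1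
  have hsum2 : Summable fun p : ℕ × ℕ => u (p.1, p.2 + p.1) := hu.comp_injective he2
  have hsumv : Summable fun p : ℕ × ℕ => u (p.2 + p.1, p.1) + u (p.1, p.2 + p.1) :=
    hsum1.add hsum2
  -- Jackson at qⁿ x
  have hpow : ∀ n m : ℕ, q ^ m * (q ^ n * x) = q ^ (m + n) * x := by
    intro n m; rw [pow_add]; ring
  have hJf : ∀ n : ℕ, jackson q f (q ^ n * x) = (1 - q) * ∑' m : ℕ, a (m + n) := by
    intro n
    unfold jackson
    congr 1
    exact tsum_congr fun m => by rw [hpow n m]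
  have hJg : ∀ n : ℕ, jackson q g (q ^ n * x) = (1 - q) * ∑' m : ℕ, b (m + n) := by
    intro n
    unfold jackson
    congr 1
    exact tsum_congr fun m => by rw [hpow n m]
  have hshifta : ∀ n : ℕ, Summable fun m : ℕ => a (m + n) :=
    fun n => ha.comp_injective fun m m' h => by omega
  have hshiftb : ∀ n : ℕ, Summable fun m : ℕ => b (m + n) :=
    fun n => hb.comp_injective fun m m' h => by omega
  -- RHS term computation
  have hterm : ∀ n : ℕ,
      (jackson q f (q ^ n * x) * g (q ^ n * x) + f (q ^ n * x) * jackson q g (q ^ n * x))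
        * (q ^ n * x)
      = (1 - q) * ∑' m : ℕ, (u (m + n, n) + u (n, m + n)) := by
    intro n
    rw [hJf n, hJg n]
    have h1 : (∑' m : ℕ, a (m + n)) * b n = ∑' m : ℕ, a (m + n) * b n :=
      (tsum_mul_right).symm
    have h2 : a n * ∑' m : ℕ, b (m + n) = ∑' m : ℕ, a n * b (m + n) :=
      (tsum_mul_left).symm
    have h3 : (∑' m : ℕ, a (m + n) * b n) + (∑' m : ℕ, a n * b (m + n))
        = ∑' m : ℕ, (a (m + n) * b n + a n * b (m + n)) :=
      (Summable.tsum_add ((hshifta n).mul_right _) ((hshiftb n).mul_left _)).symm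
    have expand : ((1 - q) * ∑' m : ℕ, a (m + n)) * g (q ^ n * x)
          * (q ^ n * x) + f (q ^ n * x) * ((1 - q) * ∑' m : ℕ, b (m + n)) * (q ^ n * x)
        = (1 - q) * ((∑' m : ℕ, a (m + n)) * b n + a n * ∑' m : ℕ, b (m + n)) := by
      simp only [ha_def, hb_def]; ring
    calc (((1 - q) * ∑' m : ℕ, a (m + n)) * g (q ^ n * x)
          + f (q ^ n * x) * ((1 - q) * ∑' m : ℕ, b (m + n))) * (q ^ n * x)
        = (1 - q) * ((∑' m : ℕ, a (m + n)) * b n + a n * ∑' m : ℕ, b (m + n)) := by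
          rw [← expand]; ring
      _ = (1 - q) * ∑' m : ℕ, (u (m + n, n) + u (n, m + n)) := by
          rw [h1, h2, h3]
  -- RHS
  have hRHS : jackson q (fun y => jackson q f y * g y + f y * jackson q g y) x
      = (1 - q) * ((1 - q) * (S + D)) := by
    unfold jackson
    congr 1
    calc ∑' n : ℕ, (jackson q f (q ^ n * x) * g (q ^ n * x)
            + f (q ^ n * x) * jackson q g (q ^ n * x)) * (q ^ n * x)
        = ∑' n : ℕ, (1 - q) * ∑' m : ℕ, (u (m + n, n) + u (n, m + n)) :=
          tsum_congr hterm
      _ = (1 - q) * ∑' n : ℕ, ∑' m : ℕ, (u (m + n, n) + u (n, m + n)) := tsum_mul_left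
      _ = (1 - q) * ∑' p : ℕ × ℕ, (u (p.2 + p.1, p.1) + u (p.1, p.2 + p.1)) := by
          rw [Summable.tsum_prod' hsumv fun n => (hu.comp_injective
            (fun m m' (h : ((m + n, n) : ℕ × ℕ) = (m' + n, n)) => by
              simp at h; omega)).add (hu.comp_injective
            (fun m m' (h : ((n, m + n) : ℕ × ℕ) = (n, m' + n)) => by
              simp at h; omega))]
      _ = (1 - q) * (S + D) := by
          rw [Summable.tsum_add hsum1 hsum2, hkey]
  -- LHS pieces
  have hL1 : jackson q f x * jackson q g x = (1 - q) * ((1 - q) * S) := by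
    unfold jackson
    have := Summable.tsum_mul_tsum ha hb hu
    rw [hS_def]
    calc ((1 - q) * ∑' n : ℕ, a n) * ((1 - q) * ∑' n : ℕ, b n)
        = (1 - q) * ((1 - q) * ((∑' n : ℕ, a n) * ∑' n : ℕ, b n)) := by ring
      _ = (1 - q) * ((1 - q) * ∑' p : ℕ × ℕ, u p) := by rw [this]
  have hL2 : jackson q (fun y => y * (f y * g y)) x = (1 - q) * D := by
    unfold jackson
    congr 1
    refine tsum_congr fun n => ?_
    simp only [ha_def, hb_def]
    ring
  rw [hL1, hL2, hRHS]
  ring
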